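/- Let A be a commutative noetherian ring, let P ⊆ A be a prime ideal, and let s ∈ A \ P be such that the ideal P + (s) is a proper ideal of A. Then the localization A_s is not a projective A-module; more precisely, A_s has projective dimension exactly 1 as an A-module. -/

import Mathlib

/-!
STATEMENT 2: Let A be a commutative noetherian ring, P ⊆ A a prime ideal, and s ∈ A \ P
such that P + (s) is a proper ideal of A.  Then the localization A_s is not a projective
A-module; more precisely, A_s has projective dimension exactly 1 as an A-module.
-/

open CategoryTheory

universe u

/-- `Ext_A^i(M, N)` as an `A`-module. -/
noncomputable abbrev extGroup (A : Type u) [CommRing A] (M N : ModuleCat.{u} A) (i : ℕ) :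
    ModuleCat A :=
  ((Ext A (ModuleCat.{u} A) i).obj (Opposite.op M)).obj N

/-- The projective dimension of an `A`-module `M`, defined as the least `n : ℕ∞` such that
`Ext_A^i(M, N) = 0` for every `A`-module `N` and every `i > n` (and `∞` if no such `n` exists). -/
noncomputable def projDim (A : Type u) [CommRing A] (M : ModuleCat.{u} A) : ℕ∞ :=
  sInf {n : ℕ∞ | ∀ (N : ModuleCat.{u} A) (i : ℕ), n < (i : ℕ∞) →
    Subsingleton (extGroup A M N i)}

namespace ProjDimAux

section Algebra

variable {A : Type u} [CommRing A] (s : A)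

noncomputable def Dmap : (ℕ →₀ A) →ₗ[A] (ℕ →₀ A) :=
  Finsupp.linearCombination A (fun n => Finsupp.single n 1 - Finsupp.single (n+1) s)

lemma Dmap_single (n : ℕ) (a : A) :
    Dmap s (Finsupp.single n a) = Finsupp.single n a - Finsupp.single (n+1) (a*s) := by
  simp [Dmap, Finsupp.linearCombination_single, smul_sub, Finsupp.smul_single, smul_eq_mul,
    mul_one]

lemma Dmap_apply_zero (x : ℕ →₀ A) : Dmap s x 0 = x 0 := by
  induction x using Finsupp.induction_linear with
  | zero => simp
  | add f g hf hg => simp [hf, hg]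
  | single n a => simp [Dmap_single, Finsupp.single_apply]

lemma Dmap_apply_succ (x : ℕ →₀ A) (n : ℕ) : Dmap s x (n+1) = x (n+1) - s * x n := by
  induction x using Finsupp.induction_linear with
  | zero => simp
  | add f g hf hg => simp [hf, hg]; ring
  | single m a =>
    simp only [Dmap_single, Finsupp.sub_apply, Finsupp.single_apply, add_left_inj]
    split_ifs <;> ring

lemma Dmap_injective : Function.Injective (Dmap s) := by
  rw [injective_iff_map_eq_zero]
  intro x hx
  ext n
  induction n with
  | zero => rw [Finsupp.coe_zero, Pi.zero_apply, ← Dmap_apply_zero s x, hx]; rfl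
  | succ n ih =>
    have h1 := congrArg (fun f : ℕ →₀ A => f (n+1)) hx
    simp only [Dmap_apply_succ, Finsupp.coe_zero, Pi.zero_apply, ih, mul_zero, sub_zero] at h1
    simpa using h1

noncomputable def pimap : (ℕ →₀ A) →ₗ[A] (Localization.Away s) :=
  Finsupp.linearCombination A
    (fun n => IsLocalization.Away.invSelf (S := Localization.Away s) s ^ n)

lemma pow_mul_invSelf_pow (n : ℕ) :
    algebraMap A (Localization.Away s) (s ^ n) *
      IsLocalization.Away.invSelf (S := Localization.Away s) s ^ n = 1 := by
  rw [map_pow, ← mul_pow, IsLocalization.Away.mul_invSelf, one_pow]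

lemma pimap_single (n : ℕ) (a : A) :
    pimap s (Finsupp.single n a)
      = a • IsLocalization.Away.invSelf (S := Localization.Away s) s ^ n := by
  simp [pimap]

lemma pimap_surjective : Function.Surjective (pimap s) := by
  intro z
  obtain ⟨⟨r, u⟩, hz⟩ := IsLocalization.mk'_surjective (Submonoid.powers s) z
  simp only at hz
  obtain ⟨n, hn⟩ := u.2
  refine ⟨Finsupp.single n r, ?_⟩
  rw [pimap_single, ← hz, IsLocalization.eq_mk'_iff_mul_eq]
  rw [Algebra.smul_def]
  conv_lhs => rw [show (u : A) = s ^ n from hn.symm]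
  rw [mul_assoc, mul_comm (IsLocalization.Away.invSelf s ^ n), pow_mul_invSelf_pow, mul_one]

lemma pimap_comp_Dmap_single (n : ℕ) (a : A) :
    pimap s (Finsupp.single n a - Finsupp.single (n+1) (a*s)) = 0 := by
  rw [map_sub, pimap_single, pimap_single, pow_succ]
  rw [Algebra.smul_def, Algebra.smul_def, map_mul, sub_eq_zero]
  rw [mul_comm (IsLocalization.Away.invSelf s ^ n), ← mul_assoc, mul_assoc _ (algebraMap A _ s)]
  rw [IsLocalization.Away.mul_invSelf, mul_one, mul_comm]

lemma pimap_comp_Dmap : (pimap s).comp (Dmap s) = 0 := by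
  apply Finsupp.lhom_ext
  intro n a
  rw [LinearMap.comp_apply, Dmap_single, pimap_comp_Dmap_single, LinearMap.zero_apply]

/-- partial weighted sums -/
noncomputable def gfun (x : ℕ →₀ A) (m : ℕ) : A := ∑ k ∈ Finset.range (m+1), s^(m-k) * x k

lemma gfun_zero (x : ℕ →₀ A) : gfun s x 0 = x 0 := by simp [gfun]

lemma gfun_succ (x : ℕ →₀ A) (m : ℕ) : gfun s x (m+1) = s * gfun s x m + x (m+1) := by
  rw [gfun, Finset.sum_range_succ, Nat.sub_self, pow_zero, one_mul, gfun, Finset.mul_sum]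
  congr 1
  apply Finset.sum_congr rfl
  intro k hk
  rw [Finset.mem_range] at hk
  rw [← mul_assoc, ← pow_succ']
  congr 2
  omega

lemma gfun_propagate (x : ℕ →₀ A) (N : ℕ) (hN : ∀ k, N < k → x k = 0) (r : ℕ) :
    gfun s x (N + r) = s ^ r * gfun s x N := by
  induction r with
  | zero => simp
  | succ r ih =>
    rw [show N + (r+1) = (N+r)+1 by omega, gfun_succ, ih, hN _ (by omega), add_zero,
      ← mul_assoc, ← pow_succ']

lemma algebraMap_term (a : A) (k N : ℕ) (hk : k ≤ N) :
    algebraMap A (Localization.Away s) (s^(N-k) * a)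
      = algebraMap A (Localization.Away s) (s^N)
        * (a • IsLocalization.Away.invSelf (S := Localization.Away s) s ^ k) := by
  rw [Algebra.smul_def, map_mul]
  conv_rhs => rw [show N = N - k + k by omega, pow_add, map_mul]
  rw [mul_mul_mul_comm, pow_mul_invSelf_pow, mul_one]

lemma ker_le_range (x : ℕ →₀ A) (hx : pimap s x = 0) : ∃ y, Dmap s y = x := by
  classical
  obtain ⟨N, hsupp⟩ : ∃ N, ∀ k, N < k → x k = 0 := by
    refine ⟨x.support.sup id, fun k hk => ?_⟩
    by_contra h
    have h2 := Finset.le_sup (f := id) (Finsupp.mem_support_iff.2 h)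
    simp only [id_eq] at h2
    omega
  have hsub : x.support ⊆ Finset.range (N+1) := by
    intro k hk
    rw [Finset.mem_range]
    by_contra h2
    exact Finsupp.mem_support_iff.1 hk (hsupp k (by omega))
  have hB : algebraMap A (Localization.Away s) (gfun s x N) = 0 := by
    have hπ : pimap s x = ∑ k ∈ Finset.range (N+1),
        x k • IsLocalization.Away.invSelf (S := Localization.Away s) s ^ k := by
      rw [pimap, Finsupp.linearCombination_apply, Finsupp.sum_of_support_subset x hsub]
      intro i _; simp
    have : algebraMap A (Localization.Away s) (gfun s x N)
        = algebraMap A (Localization.Away s) (s^N) * pimap s x := by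
      rw [hπ, gfun, map_sum, Finset.mul_sum]
      exact Finset.sum_congr rfl fun k hk =>
        algebraMap_term s (x k) k N (by have := Finset.mem_range.1 hk; omega)
    rw [this, hx, mul_zero]
  obtain ⟨u, hu⟩ := (IsLocalization.map_eq_zero_iff (Submonoid.powers s) _ _).1 hB
  obtain ⟨m, hm⟩ := u.2
  have hm' : (u : A) = s ^ m := by rw [← hm]
  rw [hm'] at hu
  have hgM : gfun s x (N + m) = 0 := by
    rw [gfun_propagate s x N hsupp m]
    exact hu
  have hsuppM : ∀ k, N + m < k → x k = 0 := fun k hk => hsupp k (by omega)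
  have hg_big : ∀ j, N + m ≤ j → gfun s x j = 0 := by
    intro j hj
    rw [show j = (N+m) + (j - (N+m)) by omega, gfun_propagate s x (N+m) hsuppM, hgM, mul_zero]
  refine ⟨Finsupp.onFinset (Finset.range (N+m+1)) (gfun s x) ?_, ?_⟩
  · intro j hj
    refine Finset.mem_range.2 ?_
    by_contra h2
    exact hj (hg_big j (by omega))
  · ext n
    cases n with
    | zero => rw [Dmap_apply_zero, Finsupp.onFinset_apply, gfun_zero]
    | succ n =>
      rw [Dmap_apply_succ, Finsupp.onFinset_apply, Finsupp.onFinset_apply, gfun_succ]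
      ring

lemma no_retraction (P : Ideal A) (hP : P.IsPrime) (hs : s ∉ P)
    (hPs : P ⊔ Ideal.span {s} ≠ ⊤) (ψ : (ℕ →₀ A) →ₗ[A] (ℕ →₀ A))
    (hψ : ∀ z, ψ (Dmap s z) = z) : False := by
  classical
  set x : ℕ → (ℕ →₀ A) := fun n => ψ (Finsupp.single n 1) with hx
  have hrel : ∀ n, x n - s • x (n+1) = Finsupp.single n 1 := by
    intro n
    have h0 := hψ (Finsupp.single n 1)
    rw [Dmap_single, map_sub] at h0
    have e1 : ψ (Finsupp.single (n+1) (1*s)) = s • ψ (Finsupp.single (n+1) 1) := by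
      rw [← map_smul]
      congr 1
      rw [Finsupp.smul_single, smul_eq_mul, mul_one, one_mul]
    rw [e1] at h0
    exact h0
  have key : ∀ d n, x n (n+d) = s^d + s^(d+1) * (x (n+d+1) (n+d)) := by
    intro d
    induction d with
    | zero =>
      intro n
      have := congrArg (fun f : ℕ →₀ A => f n) (hrel n)
      simp only [Finsupp.sub_apply, Finsupp.smul_apply, smul_eq_mul,
        Finsupp.single_eq_same] at this
      simp only [Nat.add_zero, pow_zero, pow_one]
      linear_combination this
    | succ d ih =>
      intro n
      have := congrArg (fun f : ℕ →₀ A => f (n+d+1)) (hrel n)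
      simp only [Finsupp.sub_apply, Finsupp.smul_apply, smul_eq_mul,
        Finsupp.single_apply] at this
      rw [if_neg (show ¬ n = n+d+1 by omega)] at this
      have h2 : x n (n+d+1) = s * (x (n+1) ((n+1)+d)) := by
        rw [show (n+1)+d = n+d+1 by omega]
        linear_combination this
      rw [show n+(d+1) = n+d+1 by omega, h2, ih (n+1)]
      rw [show n+1+d+1 = n+(d+1)+1 by omega, show n+1+d = n+(d+1) by omega]
      ring
  obtain ⟨k, hk⟩ := Infinite.exists_notMem_finset (x 0).support
  have hk0 : x 0 k = 0 := Finsupp.notMem_support_iff.1 hk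
  have := key k 0
  rw [Nat.zero_add, hk0] at this
  have hzero : s ^ k * (1 + s * (x (k+1) k)) = 0 := by linear_combination -1 * this
  have hmem : (1 + s * (x (k+1) k)) ∈ P := by
    rcases hP.mem_or_mem (hzero ▸ P.zero_mem) with h | h
    · exact absurd (hP.mem_of_pow_mem k h) hs
    · exact h
  apply hPs
  rw [Ideal.eq_top_iff_one]
  have h1 : (1 : A) = (1 + s * (x (k+1) k)) + (-(x (k+1) k * s)) := by ring
  rw [h1]
  exact Submodule.add_mem _ (Ideal.mem_sup_left hmem)
    (Ideal.mem_sup_right (neg_mem (Ideal.mul_mem_left _ _ (Ideal.subset_span rfl))))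

end Algebra

section Category

variable (A : Type u) [CommRing A] (s : A)

noncomputable def Fmod : ModuleCat.{u} A := ModuleCat.of A (ℕ →₀ A)

noncomputable def Lmod : ModuleCat.{u} A := ModuleCat.of A (Localization.Away s)

noncomputable def Xf : ℕ → ModuleCat.{u} A
  | 0 => Fmod A
  | 1 => Fmod A
  | _+2 => ModuleCat.of A PUnit

noncomputable def df : ∀ i j : ℕ, Xf A i ⟶ Xf A j
  | 1, 0 => ModuleCat.ofHom (Dmap s)
  | _, _ => 0

noncomputable def resComplex : ChainComplex (ModuleCat.{u} A) ℕ where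
  X := Xf A
  d := df A s
  shape i j hij := by
    match i, j with
    | 0, j => rfl
    | 1, 0 => exact absurd rfl hij
    | 1, j+1 => rfl
    | i+2, j => rfl
  d_comp_d' i j k hij hjk := by
    simp only [ComplexShape.down_Rel] at hij hjk
    subst hij; subst hjk
    have h : df A s (k+1+1) (k+1) = 0 := rfl
    rw [h, Limits.zero_comp]

lemma resComplex_d_one_zero : (resComplex A s).d 1 0 = ModuleCat.ofHom (Dmap s) := rfl

noncomputable def πres : resComplex A s ⟶ (ChainComplex.single₀ (ModuleCat.{u} A)).obj (Lmod A s) :=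
  (ChainComplex.toSingle₀Equiv _ _).symm
    ⟨ModuleCat.ofHom (pimap s), ModuleCat.hom_ext (pimap_comp_Dmap s)⟩

lemma πres_f_zero : (πres A s).f 0 = ModuleCat.ofHom (pimap s) :=
  ChainComplex.toSingle₀Equiv_symm_apply_f_zero _ _

instance resComplex_projective (n : ℕ) : Projective ((resComplex A s).X n) := by
  match n with
  | 0 => exact ModuleCat.projective_of_free (Finsupp.basisSingleOne)
  | 1 => exact ModuleCat.projective_of_free (Finsupp.basisSingleOne)
  | n+2 =>
    apply Limits.IsZero.projective
    have : Subsingleton ((resComplex A s).X (n+2) : Type u) :=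
      inferInstanceAs (Subsingleton PUnit)
    exact ModuleCat.isZero_of_subsingleton _

instance : QuasiIso (πres A s) := ⟨fun n => by
  cases n with
  | zero =>
    rw [ChainComplex.quasiIsoAt₀_iff, ShortComplex.quasiIso_iff_of_zeros']
    · constructor
      · rw [ShortComplex.moduleCat_exact_iff]
        intro x hx
        have hx2 : (πres A s).f 0 x = 0 := hx
        rw [πres_f_zero] at hx2
        obtain ⟨y, hy⟩ := ker_le_range s x hx2
        exact ⟨y, hy⟩
      · rw [show (((HomologicalComplex.shortComplexFunctor' (ModuleCat A)
            (ComplexShape.down ℕ) 1 0 0).map (πres A s)).τ₂) = (πres A s).f 0 from rfl,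
          πres_f_zero]
        exact (ModuleCat.epi_iff_surjective _).2 (pimap_surjective s)
    · rfl
    · rfl
    · rfl
  | succ n =>
    rw [quasiIsoAt_iff_exactAt' (πres A s) (n+1) (ChainComplex.exactAt_succ_single_obj _ _)]
    rw [HomologicalComplex.exactAt_iff' _ (n+2) (n+1) n (by simp) (by simp)]
    match n with
    | 0 =>
      rw [ShortComplex.moduleCat_exact_iff]
      intro x hx
      refine ⟨0, ?_⟩
      have hx' : Dmap s x = 0 := hx
      rw [map_zero]
      exact ((injective_iff_map_eq_zero _).1 (Dmap_injective s) x hx').symm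
    | n+1 =>
      apply ShortComplex.exact_of_isZero_X₂
      have : Subsingleton
          ((HomologicalComplex.sc' (resComplex A s) (n+1+2) (n+1+1) (n+1)).X₂ : Type u) :=
        inferInstanceAs (Subsingleton PUnit)
      exact ModuleCat.isZero_of_subsingleton _⟩

noncomputable def resolution : ProjectiveResolution (Lmod A s) where
  complex := resComplex A s
  π := πres A s

lemma subsingleton_of_isZero {M : ModuleCat.{u} A} (h : Limits.IsZero M) :
    Subsingleton (M : Type u) := by
  refine ⟨fun a b => ?_⟩
  have hid : 𝟙 M = 0 := h.eq_of_src _ _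
  have ha : a = (0 : M ⟶ M) a := by rw [← hid]; rfl
  have hb : b = (0 : M ⟶ M) b := by rw [← hid]; rfl
  rw [ha, hb]; rfl

lemma extGroup_two_subsingleton (N : ModuleCat.{u} A) (m : ℕ) :
    Subsingleton (((Ext A (ModuleCat.{u} A) (m+2)).obj (Opposite.op (Lmod A s))).obj N) := by
  apply subsingleton_of_isZero A
  refine Limits.IsZero.of_iso ?_ ((resolution A s).isoExt (m+2) N)
  rw [← HomologicalComplex.exactAt_iff_isZero_homology]
  rw [HomologicalComplex.exactAt_iff' _ (m+1) (m+2) (m+3) (by simp) (by simp)]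
  apply ShortComplex.exact_of_isZero_X₂
  letI : Subsingleton ((resComplex A s).X (m+2) : Type u) :=
    inferInstanceAs (Subsingleton PUnit)
  letI : Subsingleton ((resComplex A s).X (m+2) ⟶ N) :=
    ⟨fun f g => ModuleCat.hom_ext (LinearMap.ext fun x => by rw [Subsingleton.elim x 0, map_zero, map_zero])⟩
  have : Subsingleton
      (((HomologicalComplex.sc' ((resolution A s).complex.linearYonedaObj A N)
        (m+1) (m+2) (m+3)).X₂ : Type u)) :=
    inferInstanceAs (Subsingleton ((resComplex A s).X (m+2) ⟶ N))
  exact ModuleCat.isZero_of_subsingleton _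

lemma extGroup_one_not_subsingleton (P : Ideal A) (hP : P.IsPrime) (hs : s ∉ P)
    (hPs : P ⊔ Ideal.span {s} ≠ ⊤) :
    ¬ Subsingleton (((Ext A (ModuleCat.{u} A) 1).obj (Opposite.op (Lmod A s))).obj (Fmod A)) := by
  intro h
  have hz : Limits.IsZero (((Ext A (ModuleCat.{u} A) 1).obj
      (Opposite.op (Lmod A s))).obj (Fmod A)) := ModuleCat.isZero_of_subsingleton _
  have hzh := Limits.IsZero.of_iso hz ((resolution A s).isoExt 1 (Fmod A)).symm
  have hex := (HomologicalComplex.exactAt_iff_isZero_homology _ 1).2 hzh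
  rw [HomologicalComplex.exactAt_iff' _ 0 1 2 (by simp) (by simp),
    ShortComplex.moduleCat_exact_iff] at hex
  letI : Subsingleton ((resComplex A s).X 2 : Type u) := inferInstanceAs (Subsingleton PUnit)
  letI : Subsingleton ((resComplex A s).X 2 ⟶ Fmod A) :=
    ⟨fun f g => ModuleCat.hom_ext (LinearMap.ext fun x => by rw [Subsingleton.elim x 0, map_zero, map_zero])⟩
  letI : Subsingleton
      (((HomologicalComplex.sc' ((resolution A s).complex.linearYonedaObj A (Fmod A))
        0 1 2).X₃ : Type u)) :=
    inferInstanceAs (Subsingleton ((resComplex A s).X 2 ⟶ Fmod A))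
  obtain ⟨ψ, hψ⟩ := hex (show (resComplex A s).X 1 ⟶ Fmod A from 𝟙 (Fmod A))
    (Subsingleton.elim _ _)
  have hψ2 : (((resolution A s).complex.linearYonedaObj A (Fmod A)).d 0 1) ψ
      = (show (resComplex A s).X 1 ⟶ Fmod A from 𝟙 (Fmod A)) := hψ
  rw [ChainComplex.linearYonedaObj_d] at hψ2
  have hψ3 : (resComplex A s).d 1 0 ≫ ψ
      = (show (resComplex A s).X 1 ⟶ Fmod A from 𝟙 (Fmod A)) := hψ2
  refine no_retraction s P hP hs hPs (show (resComplex A s).X 0 ⟶ Fmod A from ψ).hom (fun z => ?_)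
  exact congrArg (fun f : (resComplex A s).X 1 ⟶ Fmod A => f.hom z) hψ3

end Category

end ProjDimAux

open ProjDimAux in
theorem projDim_localizationAway_eq_one
    (A : Type u) [CommRing A] [IsNoetherianRing A]
    (P : Ideal A) (hP : P.IsPrime) (s : A) (hs : s ∉ P)
    (hPs : P ⊔ Ideal.span {s} ≠ ⊤) :
    ¬ Module.Projective A (Localization.Away s) ∧
      projDim A (ModuleCat.of A (Localization.Away s)) = 1 := by
  have hext1 := extGroup_one_not_subsingleton A s P hP hs hPs
  constructor
  · intro hproj
    letI hp2 : Projective (Lmod A s) :=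
      (IsProjective.iff_projective _).1 hproj
    exact hext1 (subsingleton_of_isZero A (isZero_Ext_succ_of_projective _ _ 0))
  · apply le_antisymm
    · apply sInf_le
      intro N i hi
      obtain ⟨m, rfl⟩ : ∃ m, i = m + 2 := by
        have h1 : 1 < i := by exact_mod_cast hi
        exact ⟨i - 2, by omega⟩
      exact extGroup_two_subsingleton A s N m
    · apply le_sInf
      intro b hb
      by_contra hlt
      push_neg at hlt
      have hb0 : b = 0 := ENat.lt_one_iff_eq_zero.1 hlt
      subst hb0
      exact hext1 (hb (Fmod A) 1 (by norm_num))
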